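/- Every involution of {1,...,n} that avoids 312 also avoids 3412 and 231; consequently the sets of involutions avoiding {3412,312}, avoiding {3412,231}, and avoiding 312 all coincide, and their common cardinality is 2^{n−1} for n ≥ 1. -/

import Mathlib

def Av3412 {n : ℕ} (σ : Equiv.Perm (Fin n)) : Prop :=
  ¬ ∃ i j k l : Fin n, i < j ∧ j < k ∧ k < l ∧ σ k < σ l ∧ σ l < σ i ∧ σ i < σ j

def Av312 {n : ℕ} (σ : Equiv.Perm (Fin n)) : Prop :=
  ¬ ∃ i j k : Fin n, i < j ∧ j < k ∧ σ j < σ k ∧ σ k < σ i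

def Av231 {n : ℕ} (σ : Equiv.Perm (Fin n)) : Prop :=
  ¬ ∃ i j k : Fin n, i < j ∧ j < k ∧ σ k < σ i ∧ σ i < σ j

namespace AvAux

lemma invol {N : ℕ} {τ : Equiv.Perm (Fin N)} (h : τ * τ = 1) (i : Fin N) :
    τ (τ i) = i := by
  have h' := congrArg (fun σ : Equiv.Perm (Fin N) => σ i) h
  simpa using h'

lemma av312_imp_av3412 {N : ℕ} {τ : Equiv.Perm (Fin N)} (h : Av312 τ) : Av3412 τ := by
  rintro ⟨i, j, k, l, hij, hjk, hkl, h1, h2, h3⟩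
  exact h ⟨i, k, l, lt_trans hij hjk, hkl, h1, h2⟩

lemma inv_av312_imp_av231 {N : ℕ} {τ : Equiv.Perm (Fin N)} (hinv : τ * τ = 1)
    (h : Av312 τ) : Av231 τ := by
  rintro ⟨i, j, k, hij, hjk, h1, h2⟩
  refine h ⟨τ k, τ i, τ j, h1, h2, ?_, ?_⟩
  · rw [invol hinv, invol hinv]; exact hij
  · rw [invol hinv, invol hinv]; exact hjk

lemma inv_av231_imp_av312 {N : ℕ} {τ : Equiv.Perm (Fin N)} (hinv : τ * τ = 1)
    (h : Av231 τ) : Av312 τ := by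
  rintro ⟨i, j, k, hij, hjk, h1, h2⟩
  refine h ⟨τ j, τ k, τ i, h1, h2, ?_, ?_⟩
  · rw [invol hinv, invol hinv]; exact hij
  · rw [invol hinv, invol hinv]; exact hjk

section Struct

variable {N : ℕ} {τ : Equiv.Perm (Fin N)} {L M : Fin N}

lemma sA (hinv : τ * τ = 1) (hav : Av312 τ) (hL : (L : ℕ) = N - 1) (hM : τ L = M)
    (i : Fin N) (hi : M ≤ i) : M ≤ τ i := by
  have hML : τ M = L := by rw [← hM, invol hinv]
  by_contra hcon
  push_neg at hcon
  have hiL : i ≠ L := by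
    intro he
    rw [he, hM] at hcon
    exact lt_irrefl _ hcon
  have hiM : i ≠ M := by
    intro he
    rw [he, hML] at hcon
    have h1 : (L : ℕ) < (M : ℕ) := hcon
    have h2 := M.isLt
    omega
  have hMi : M < i := lt_of_le_of_ne hi (Ne.symm hiM)
  have hiL' : i < L := by
    have : (i : ℕ) < N := i.isLt
    have : (i : ℕ) ≠ (L : ℕ) := fun h => hiL (Fin.ext h)
    exact Fin.lt_def.mpr (by omega)
  refine hav ⟨M, i, L, hMi, hiL', ?_, ?_⟩
  · rw [hM]; exact hcon
  · rw [hM, hML]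
    have : (M : ℕ) < (i : ℕ) := hMi
    have : (i : ℕ) < (L : ℕ) := hiL'
    exact Fin.lt_def.mpr (by omega)

lemma sB (hinv : τ * τ = 1) (hav : Av312 τ) (hL : (L : ℕ) = N - 1) (hM : τ L = M)
    (i : Fin N) (hi : i < M) : τ i < M := by
  by_contra hcon
  push_neg at hcon
  have := sA hinv hav hL hM (τ i) hcon
  rw [invol hinv] at this
  exact absurd hi (not_lt.mpr this)

lemma sDec (hinv : τ * τ = 1) (hav : Av312 τ) (hL : (L : ℕ) = N - 1) (hM : τ L = M)
    (i j : Fin N) (hMi : M ≤ i) (hij : i < j) : τ j < τ i := by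
  have hML : τ M = L := by rw [← hM, invol hinv]
  rcases lt_trichotomy (τ i) (τ j) with h | h | h
  · exfalso
    have hjL : j ≤ L := by
      have := j.isLt
      exact Fin.le_def.mpr (by omega)
    rcases eq_or_lt_of_le hjL with rfl | hjL'
    · rw [hM] at h
      have := sA hinv hav hL hM i hMi
      exact absurd h (not_lt.mpr this)
    have hiM : i ≠ M := by
      rintro rfl
      rw [hML] at h
      have := (τ j).isLt
      have h1 : (L : ℕ) < (τ j : ℕ) := h
      omega
    have hMi' : M < i := lt_of_le_of_ne hMi (Ne.symm hiM)
    have hMτi : M < τ i := by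
      have h1 := sA hinv hav hL hM i hMi
      rcases eq_or_lt_of_le h1 with h2 | h2
      · exfalso
        have : τ (τ i) = τ M := by rw [h2]
        rw [invol hinv, hML] at this
        rw [this] at hij
        have := j.isLt
        have h3 : (L:ℕ) < (j:ℕ) := hij
        omega
      · exact h2
    exact inv_av312_imp_av231 hinv hav ⟨i, j, L, hij, hjL', by rw [hM]; exact hMτi, h⟩
  · exact absurd (τ.injective h) (ne_of_lt hij)
  · exact h

lemma sVal (hinv : τ * τ = 1) (hav : Av312 τ) (hL : (L : ℕ) = N - 1) (hM : τ L = M) :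
    ∀ t : ℕ, ∀ i : Fin N, M ≤ i → N - 1 - (i : ℕ) ≤ t →
      (τ i : ℕ) = (M : ℕ) + (N - 1) - (i : ℕ) := by
  intro t
  induction t with
  | zero =>
    intro i hMi hti
    have hiN := i.isLt
    have : i = L := Fin.ext (by omega)
    subst this
    rw [hM]
    omega
  | succ t ih =>
    intro i hMi hti
    rcases le_or_gt (N - 1 - (i:ℕ)) t with h | h
    · exact ih i hMi h
    have hiN := i.isLt
    have hMN := M.isLt
    have hival : (i : ℕ) + t + 2 = N := by omega
    have hMi' : (M : ℕ) ≤ (i : ℕ) := hMi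
    set i' : Fin N := ⟨(i : ℕ) + 1, by omega⟩ with hi'
    have hMi'' : M ≤ i' := Fin.le_def.mpr (by simp [hi']; omega)
    have ihv : (τ i' : ℕ) = (M : ℕ) + (N - 1) - ((i : ℕ) + 1) := by
      have := ih i' hMi'' (by simp [hi']; omega)
      simpa [hi'] using this
    set v' : ℕ := (M : ℕ) + (N - 1) - ((i : ℕ) + 1) with hv'
    have hv'M : (M : ℕ) ≤ v' := by omega
    have hv'N : v' + 1 < N := by omega
    set w : Fin N := ⟨v' + 1, hv'N⟩ with hw
    set u : Fin N := τ w with hu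
    have hτu : τ u = w := by rw [hu, invol hinv]
    have hMw : M ≤ w := Fin.le_def.mpr (by simp [hw]; omega)
    have hMu : M ≤ u := sA hinv hav hL hM w hMw
    have hdec : τ i' < τ i := sDec hinv hav hL hM i i' hMi (Fin.lt_def.mpr (by simp [hi']))
    have hdecv : v' < (τ i : ℕ) := by rw [← ihv]; exact hdec
    rcases lt_trichotomy u i with hc | hc | hc
    · exfalso
      have := sDec hinv hav hL hM u i hMu hc
      rw [hτu] at this
      have h1 : (τ i : ℕ) < v' + 1 := this
      omega
    · rw [← hc, hτu]
      simp [hw]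
      omega
    · exfalso
      have hui' : u ≠ i' := by
        intro he
        rw [he] at hτu
        rw [hτu] at ihv
        simp [hw] at ihv
      have hi'u : i' < u := by
        have h1 : (i : ℕ) < (u : ℕ) := hc
        have h2 : (u : ℕ) ≠ (i : ℕ) + 1 := fun he => hui' (Fin.ext (by simp [hi', he]))
        exact Fin.lt_def.mpr (by simp [hi']; omega)
      have := sDec hinv hav hL hM i' u hMi'' hi'u
      rw [hτu] at this
      have h1 : (v' : ℕ) + 1 < (τ i' : ℕ) := by
        have := Fin.lt_def.mp this
        simpa [hw] using this
      omega

lemma sS3 (hinv : τ * τ = 1) (hav : Av312 τ) (hL : (L : ℕ) = N - 1) (hM : τ L = M)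
    (i : Fin N) (hMi : M ≤ i) : (τ i : ℕ) = (M : ℕ) + (N - 1) - (i : ℕ) :=
  sVal hinv hav hL hM (N - 1 - (i : ℕ)) i hMi le_rfl

end Struct

end AvAux
namespace AvAux

section Maps

variable {n : ℕ}

/-- shrink when the last point is fixed -/
def f1 (τ : Equiv.Perm (Fin (n+1))) (hb : ∀ i : Fin n, (τ i.castSucc : ℕ) < n) :
    Fin n → Fin n := fun i => ⟨(τ i.castSucc : ℕ), hb i⟩

lemma f1_inv {τ : Equiv.Perm (Fin (n+1))} (hinv : τ * τ = 1)
    (hb : ∀ i : Fin n, (τ i.castSucc : ℕ) < n) :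
    Function.Involutive (f1 τ hb) := by
  intro i
  unfold f1
  have h1 : (⟨(τ i.castSucc : ℕ), Nat.lt_succ_of_lt (hb i)⟩ : Fin (n+1)) = τ i.castSucc :=
    Fin.ext rfl
  apply Fin.ext
  simp only
  have h2 : Fin.castSucc (⟨(τ i.castSucc : ℕ), hb i⟩ : Fin n) = τ i.castSucc :=
    Fin.ext rfl
  rw [h2, invol hinv]
  rfl

lemma f1_av {τ : Equiv.Perm (Fin (n+1))} (hinv : τ * τ = 1) (hav : Av312 τ)
    (hb : ∀ i : Fin n, (τ i.castSucc : ℕ) < n) :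
    Av312 ((f1_inv hinv hb).toPerm) := by
  rintro ⟨i, j, k, hij, hjk, h1, h2⟩
  simp only [Function.Involutive.coe_toPerm] at h1 h2
  refine hav ⟨i.castSucc, j.castSucc, k.castSucc, ?_, ?_, ?_, ?_⟩
  · exact Fin.castSucc_lt_castSucc_iff.mpr hij
  · exact Fin.castSucc_lt_castSucc_iff.mpr hjk
  · exact Fin.lt_def.mpr h1
  · exact Fin.lt_def.mpr h2

/-- extend by a fixed last point -/
def g1 (σ : Equiv.Perm (Fin n)) : Fin (n+1) → Fin (n+1) := fun i =>
  if h : (i : ℕ) < n then ⟨(σ ⟨i, h⟩ : ℕ), Nat.lt_succ_of_lt (σ ⟨i, h⟩).isLt⟩ else i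

lemma g1_inv (σ : Equiv.Perm (Fin n)) (hinv : σ * σ = 1) :
    Function.Involutive (g1 σ) := by
  intro i
  unfold g1
  by_cases h : (i : ℕ) < n
  · rw [dif_pos h]
    have h2 : ((σ ⟨(i:ℕ), h⟩ : Fin n) : ℕ) < n := (σ _).isLt
    rw [dif_pos h2]
    apply Fin.ext
    simp only
    have h3 : (⟨((σ ⟨(i:ℕ), h⟩ : Fin n) : ℕ), h2⟩ : Fin n) = σ ⟨(i:ℕ), h⟩ := Fin.ext rfl
    rw [h3, invol hinv]
  · rw [dif_neg h, dif_neg h]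

lemma g1_av (σ : Equiv.Perm (Fin n)) (hinv : σ * σ = 1) (hav : Av312 σ) :
    Av312 ((g1_inv σ hinv).toPerm) := by
  rintro ⟨i, j, k, hij, hjk, h1, h2⟩
  simp only [Function.Involutive.coe_toPerm] at h1 h2
  unfold g1 at h1 h2
  have hkn : (k : ℕ) < n := by
    by_contra hk
    simp only [dif_neg hk] at h1 h2
    by_cases hi : (i : ℕ) < n
    · rw [dif_pos hi] at h2
      have := (σ ⟨(i:ℕ), hi⟩).isLt
      have hk' : (k : ℕ) = n := by have := k.isLt; omega
      have := Fin.lt_def.mp h2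
      simp only at this
      omega
    · rw [dif_neg hi] at h2
      have h3 : (k:ℕ) < (i:ℕ) := h2
      have h4 : (i:ℕ) < (k:ℕ) := lt_trans hij hjk
      omega
  have hjn : (j : ℕ) < n := lt_trans (Fin.lt_def.mp hjk) hkn
  have hin : (i : ℕ) < n := lt_trans (Fin.lt_def.mp hij) hjn
  simp only [dif_pos hin, dif_pos hjn, dif_pos hkn] at h1 h2
  refine hav ⟨⟨(i:ℕ), hin⟩, ⟨(j:ℕ), hjn⟩, ⟨(k:ℕ), hkn⟩, ?_, ?_, ?_, ?_⟩
  · exact Fin.lt_def.mpr hij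
  · exact Fin.lt_def.mpr hjk
  · exact Fin.lt_def.mpr (Fin.lt_def.mp h1)
  · exact Fin.lt_def.mpr (Fin.lt_def.mp h2)

/-- shrink when the last point is not fixed; `m` is the image of the last point -/
def f2 (τ : Equiv.Perm (Fin (n+1))) (m : ℕ) (hm : m < n)
    (hb : ∀ i : Fin (n+1), (i : ℕ) < m → (τ i : ℕ) < m) : Fin n → Fin n := fun i =>
  if h : (i : ℕ) < m then
    ⟨(τ ⟨(i:ℕ), by omega⟩ : ℕ), by have := hb ⟨(i:ℕ), by omega⟩ h; omega⟩
  else ⟨m + (n-1) - (i:ℕ), by have := i.isLt; omega⟩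

lemma f2_inv {τ : Equiv.Perm (Fin (n+1))} (hinv : τ * τ = 1) {m : ℕ} (hm : m < n)
    (hb : ∀ i : Fin (n+1), (i : ℕ) < m → (τ i : ℕ) < m) :
    Function.Involutive (f2 τ m hm hb) := by
  intro i
  unfold f2
  by_cases h : (i : ℕ) < m
  · rw [dif_pos h]
    have h2 : (τ ⟨(i:ℕ), by omega⟩ : ℕ) < m := hb _ h
    rw [dif_pos h2]
    apply Fin.ext
    simp only
    have h3 : (⟨((τ ⟨(i:ℕ), by omega⟩ : Fin (n+1)) : ℕ), by omega⟩ : Fin (n+1))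
        = τ ⟨(i:ℕ), by omega⟩ := Fin.ext rfl
    rw [h3, invol hinv]
  · rw [dif_neg h]
    have hi := i.isLt
    have h2 : ¬ (m + (n-1) - (i:ℕ) < m) := by omega
    rw [dif_neg h2]
    apply Fin.ext
    simp only
    omega

lemma f2_av {τ : Equiv.Perm (Fin (n+1))} (hinv : τ * τ = 1) (hav : Av312 τ)
    {m : ℕ} (hm : m < n) (hb : ∀ i : Fin (n+1), (i : ℕ) < m → (τ i : ℕ) < m) :
    Av312 ((f2_inv hinv hm hb).toPerm) := by
  rintro ⟨i, j, k, hij, hjk, h1, h2⟩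
  simp only [Function.Involutive.coe_toPerm] at h1 h2
  unfold f2 at h1 h2
  by_cases hi : (i : ℕ) < m
  · rw [dif_pos hi] at h2
    have him : (τ ⟨(i:ℕ), by omega⟩ : ℕ) < m := hb _ hi
    have hkm : (k : ℕ) < m := by
      by_contra hk
      simp only [dif_neg hk] at h1 h2
      have h2' := Fin.lt_def.mp h2
      simp only at h2'
      have := k.isLt
      omega
    have hjm : (j : ℕ) < m := lt_trans (Fin.lt_def.mp hjk) hkm
    simp only [dif_pos hjm, dif_pos hkm] at h1 h2
    refine hav ⟨⟨(i:ℕ), by omega⟩, ⟨(j:ℕ), by omega⟩, ⟨(k:ℕ), by omega⟩, ?_, ?_, ?_, ?_⟩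
    · exact Fin.lt_def.mpr hij
    · exact Fin.lt_def.mpr hjk
    · exact Fin.lt_def.mpr (Fin.lt_def.mp h1)
    · exact Fin.lt_def.mpr (Fin.lt_def.mp h2)
  · have hjm : ¬ (j : ℕ) < m := by have := Fin.lt_def.mp hij; omega
    have hkm : ¬ (k : ℕ) < m := by have := Fin.lt_def.mp hjk; omega
    simp only [dif_neg hjm, dif_neg hkm] at h1
    have h1' := Fin.lt_def.mp h1
    simp only at h1'
    have := Fin.lt_def.mp hjk
    have := j.isLt
    have := k.isLt
    omega

/-- extend with a final decreasing block starting at value m -/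
def g2 (σ : Equiv.Perm (Fin n)) (m : ℕ) (hm : m < n)
    (hb : ∀ i : Fin n, (i : ℕ) < m → (σ i : ℕ) < m) : Fin (n+1) → Fin (n+1) := fun i =>
  if h : (i : ℕ) < m then
    ⟨(σ ⟨(i:ℕ), by omega⟩ : ℕ), by have := (σ ⟨(i:ℕ), by omega⟩).isLt; omega⟩
  else ⟨m + n - (i:ℕ), by have := i.isLt; omega⟩

lemma g2_inv {σ : Equiv.Perm (Fin n)} (hinv : σ * σ = 1) {m : ℕ} (hm : m < n)
    (hb : ∀ i : Fin n, (i : ℕ) < m → (σ i : ℕ) < m) :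
    Function.Involutive (g2 σ m hm hb) := by
  intro i
  unfold g2
  by_cases h : (i : ℕ) < m
  · rw [dif_pos h]
    have h2 : (σ ⟨(i:ℕ), by omega⟩ : ℕ) < m := hb _ h
    rw [dif_pos h2]
    apply Fin.ext
    simp only
    have h3 : (⟨((σ ⟨(i:ℕ), by omega⟩ : Fin n) : ℕ), by omega⟩ : Fin n)
        = σ ⟨(i:ℕ), by omega⟩ := Fin.ext rfl
    rw [h3, invol hinv]
  · rw [dif_neg h]
    have hi := i.isLt
    have h2 : ¬ (m + n - (i:ℕ) < m) := by omega
    rw [dif_neg h2]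
    apply Fin.ext
    simp only
    omega

lemma g2_av {σ : Equiv.Perm (Fin n)} (hinv : σ * σ = 1) (hav : Av312 σ)
    {m : ℕ} (hm : m < n) (hb : ∀ i : Fin n, (i : ℕ) < m → (σ i : ℕ) < m) :
    Av312 ((g2_inv hinv hm hb).toPerm) := by
  rintro ⟨i, j, k, hij, hjk, h1, h2⟩
  simp only [Function.Involutive.coe_toPerm] at h1 h2
  unfold g2 at h1 h2
  by_cases hi : (i : ℕ) < m
  · rw [dif_pos hi] at h2
    have hkm : (k : ℕ) < m := by
      by_contra hk
      simp only [dif_neg hk] at h2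
      have h2' := Fin.lt_def.mp h2
      simp only at h2'
      have := hb ⟨(i:ℕ), by omega⟩ hi
      have := k.isLt
      omega
    have hjm : (j : ℕ) < m := lt_trans (Fin.lt_def.mp hjk) hkm
    simp only [dif_pos hjm, dif_pos hkm] at h1 h2
    refine hav ⟨⟨(i:ℕ), by omega⟩, ⟨(j:ℕ), by omega⟩, ⟨(k:ℕ), by omega⟩, ?_, ?_, ?_, ?_⟩
    · exact Fin.lt_def.mpr hij
    · exact Fin.lt_def.mpr hjk
    · exact Fin.lt_def.mpr (Fin.lt_def.mp h1)
    · exact Fin.lt_def.mpr (Fin.lt_def.mp h2)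
  · have hjm : ¬ (j : ℕ) < m := by have := Fin.lt_def.mp hij; omega
    have hkm : ¬ (k : ℕ) < m := by have := Fin.lt_def.mp hjk; omega
    simp only [dif_neg hjm, dif_neg hkm] at h1
    have h1' := Fin.lt_def.mp h1
    simp only at h1'
    have := Fin.lt_def.mp hjk
    have := j.isLt
    have := k.isLt
    omega

end Maps

end AvAux
namespace AvAux

lemma toPerm_sq {α : Type*} {f : α → α} (hf : Function.Involutive f) :
    hf.toPerm * hf.toPerm = 1 := by
  ext i
  simp [Equiv.Perm.mul_apply, hf i]

section Eval

variable {n : ℕ}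

lemma f1_val (τ : Equiv.Perm (Fin (n+1))) (hb) (i : Fin n) (j : Fin (n+1))
    (hij : (j : ℕ) = (i : ℕ)) : (f1 τ hb i : ℕ) = (τ j : ℕ) := by
  unfold f1
  exact congrArg (fun z => ((τ z : Fin (n+1)) : ℕ)) (Fin.ext (by simp [hij]))

lemma g1_lt (σ : Equiv.Perm (Fin n)) (i : Fin (n+1)) (j : Fin n)
    (hij : (j : ℕ) = (i : ℕ)) (h : (i : ℕ) < n) : (g1 σ i : ℕ) = (σ j : ℕ) := by
  unfold g1
  rw [dif_pos h]
  exact congrArg (fun z => ((σ z : Fin n) : ℕ)) (Fin.ext hij.symm)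

lemma g1_ge (σ : Equiv.Perm (Fin n)) (i : Fin (n+1)) (h : ¬ (i : ℕ) < n) :
    g1 σ i = i := by
  unfold g1; rw [dif_neg h]

lemma f2_lt (τ : Equiv.Perm (Fin (n+1))) (m : ℕ) (hm : m < n) (hb) (i : Fin n)
    (j : Fin (n+1)) (hij : (j : ℕ) = (i : ℕ)) (h : (i : ℕ) < m) :
    (f2 τ m hm hb i : ℕ) = (τ j : ℕ) := by
  unfold f2
  rw [dif_pos h]
  exact congrArg (fun z => ((τ z : Fin (n+1)) : ℕ)) (Fin.ext hij.symm)

lemma f2_ge (τ : Equiv.Perm (Fin (n+1))) (m : ℕ) (hm : m < n) (hb) (i : Fin n)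
    (h : ¬ (i : ℕ) < m) :
    (f2 τ m hm hb i : ℕ) = m + (n-1) - (i:ℕ) := by
  unfold f2; rw [dif_neg h]

lemma g2_lt (σ : Equiv.Perm (Fin n)) (m : ℕ) (hm : m < n) (hb) (i : Fin (n+1))
    (j : Fin n) (hij : (j : ℕ) = (i : ℕ)) (h : (i : ℕ) < m) :
    (g2 σ m hm hb i : ℕ) = (σ j : ℕ) := by
  unfold g2
  rw [dif_pos h]
  exact congrArg (fun z => ((σ z : Fin n) : ℕ)) (Fin.ext hij.symm)

lemma g2_ge (σ : Equiv.Perm (Fin n)) (m : ℕ) (hm : m < n) (hb) (i : Fin (n+1))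
    (h : ¬ (i : ℕ) < m) :
    (g2 σ m hm hb i : ℕ) = m + n - (i:ℕ) := by
  unfold g2; rw [dif_neg h]

lemma hb1 {τ : Equiv.Perm (Fin (n+1))} (hlast : τ (Fin.last n) = Fin.last n) :
    ∀ i : Fin n, (τ i.castSucc : ℕ) < n := by
  intro i
  by_contra h
  have h1 : τ i.castSucc = Fin.last n := by
    apply Fin.ext
    have := (τ i.castSucc).isLt
    simp only [Fin.val_last]
    omega
  have h2 : i.castSucc = Fin.last n := τ.injective (h1.trans hlast.symm)
  have h3 := congrArg Fin.val h2
  simp only [Fin.coe_castSucc, Fin.val_last] at h3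
  have := i.isLt
  omega

lemma hm2 {τ : Equiv.Perm (Fin (n+1))} (hne : ¬ τ (Fin.last n) = Fin.last n) :
    (τ (Fin.last n) : ℕ) < n := by
  have h1 := (τ (Fin.last n)).isLt
  have h2 : (τ (Fin.last n) : ℕ) ≠ n := by
    intro h
    exact hne (Fin.ext (by simp [h]))
  omega

lemma hb2 {τ : Equiv.Perm (Fin (n+1))} (hinv : τ * τ = 1) (hav : Av312 τ) :
    ∀ i : Fin (n+1), (i : ℕ) < (τ (Fin.last n) : ℕ) → (τ i : ℕ) < (τ (Fin.last n) : ℕ) :=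
  fun i hi => Fin.lt_def.mp
    (sB hinv hav (by simp) rfl i (Fin.lt_def.mpr hi))

lemma hb2' (hn : 0 < n) {σ : Equiv.Perm (Fin n)} (hinv : σ * σ = 1) (hav : Av312 σ) :
    ∀ i : Fin n, (i : ℕ) < (σ ⟨n-1, by omega⟩ : ℕ) → (σ i : ℕ) < (σ ⟨n-1, by omega⟩ : ℕ) :=
  fun i hi => Fin.lt_def.mp
    (sB hinv hav (by simp) rfl i (Fin.lt_def.mpr hi))

lemma sS3' {τ : Equiv.Perm (Fin (n+1))} (hinv : τ * τ = 1) (hav : Av312 τ)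
    (i : Fin (n+1)) (hi : (τ (Fin.last n) : ℕ) ≤ (i : ℕ)) :
    (τ i : ℕ) = (τ (Fin.last n) : ℕ) + n - (i : ℕ) := by
  have := sS3 hinv hav (L := Fin.last n) (M := τ (Fin.last n)) (by simp) rfl i
    (Fin.le_def.mpr hi)
  omega

lemma sS3'' (hn : 0 < n) {σ : Equiv.Perm (Fin n)} (hinv : σ * σ = 1) (hav : Av312 σ)
    {m : ℕ} (hm : (σ ⟨n-1, by omega⟩ : ℕ) = m)
    (i : Fin n) (hi : m ≤ (i : ℕ)) :
    (σ i : ℕ) = m + (n-1) - (i : ℕ) := by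
  have h0 : ((⟨n-1, by omega⟩ : Fin n) : ℕ) = n - 1 := rfl
  have := sS3 hinv hav (L := (⟨n-1, by omega⟩ : Fin n)) (M := σ ⟨n-1, by omega⟩)
    h0 rfl i (Fin.le_def.mpr (by rw [hm]; exact hi))
  rw [hm] at this
  omega

end Eval

section Equivs

variable {n : ℕ}

def E1 : {τ : Equiv.Perm (Fin (n+1)) // (τ * τ = 1 ∧ Av312 τ) ∧ τ (Fin.last n) = Fin.last n}
    ≃ {σ : Equiv.Perm (Fin n) // σ * σ = 1 ∧ Av312 σ} where
  toFun x := ⟨(f1_inv x.2.1.1 (hb1 x.2.2)).toPerm,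
    toPerm_sq _, f1_av x.2.1.1 x.2.1.2 (hb1 x.2.2)⟩
  invFun y := ⟨(g1_inv y.1 y.2.1).toPerm,
    ⟨toPerm_sq _, g1_av y.1 y.2.1 y.2.2⟩, by
      apply Fin.ext
      simp only [Function.Involutive.coe_toPerm]
      rw [g1_ge y.1 (Fin.last n) (by simp)]⟩
  left_inv x := by
    obtain ⟨τ, ⟨hinv, hav⟩, hlast⟩ := x
    apply Subtype.ext
    apply Equiv.ext
    intro i
    simp only [Function.Involutive.coe_toPerm]
    by_cases h : (i : ℕ) < n
    · apply Fin.ext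
      rw [g1_lt _ i ⟨(i:ℕ), h⟩ rfl h]
      simp only [Function.Involutive.coe_toPerm]
      rw [f1_val _ _ ⟨(i:ℕ), h⟩ i rfl]
    · rw [g1_ge _ i h]
      have hi : i = Fin.last n := Fin.ext (by have := i.isLt; simp only [Fin.val_last]; omega)
      rw [hi, hlast]
  right_inv y := by
    obtain ⟨σ, hinv, hav⟩ := y
    apply Subtype.ext
    apply Equiv.ext
    intro i
    simp only [Function.Involutive.coe_toPerm]
    apply Fin.ext
    rw [f1_val _ _ i i.castSucc (by simp)]
    simp only [Function.Involutive.coe_toPerm]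
    rw [g1_lt _ i.castSucc i (by simp) (by simpa using i.isLt)]

def E2 (hn : 0 < n) :
    {τ : Equiv.Perm (Fin (n+1)) // (τ * τ = 1 ∧ Av312 τ) ∧ ¬ τ (Fin.last n) = Fin.last n}
    ≃ {σ : Equiv.Perm (Fin n) // σ * σ = 1 ∧ Av312 σ} where
  toFun x := ⟨(f2_inv x.2.1.1 (hm2 x.2.2) (hb2 x.2.1.1 x.2.1.2)).toPerm,
    toPerm_sq _, f2_av x.2.1.1 x.2.1.2 (hm2 x.2.2) (hb2 x.2.1.1 x.2.1.2)⟩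
  invFun y := by
    have hm : ((y.1 ⟨n-1, by omega⟩ : Fin n) : ℕ) < n := Fin.isLt _
    refine ⟨(g2_inv y.2.1 hm (hb2' hn y.2.1 y.2.2)).toPerm,
      ⟨toPerm_sq _, g2_av y.2.1 y.2.2 hm _⟩, ?_⟩
    intro hcon
    have h1 := congrArg Fin.val hcon
    simp only [Function.Involutive.coe_toPerm] at h1
    rw [g2_ge _ _ _ _ (Fin.last n) (by simp only [Fin.val_last]; omega)] at h1
    simp only [Fin.val_last] at h1
    omega
  left_inv x := by
    obtain ⟨τ, ⟨hinv, hav⟩, hne⟩ := x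
    apply Subtype.ext
    apply Equiv.ext
    intro i
    simp only [Function.Involutive.coe_toPerm]
    have hm : (τ (Fin.last n) : ℕ) < n := hm2 hne
    have hm' : (f2 τ (τ (Fin.last n) : ℕ) (hm2 hne) (hb2 hinv hav) (⟨n-1, by omega⟩ : Fin n) : ℕ)
        = (τ (Fin.last n) : ℕ) := by
      rw [f2_ge _ _ _ _ _ (by show ¬ (n-1 < (τ (Fin.last n) : ℕ)); omega)]
      show (τ (Fin.last n) : ℕ) + (n-1) - (n-1) = (τ (Fin.last n) : ℕ)
      omega
    by_cases h : (i : ℕ) < (τ (Fin.last n) : ℕ)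
    · apply Fin.ext
      refine (g2_lt _ _ _ _ i ⟨(i:ℕ), by omega⟩ rfl (by rw [hm']; exact h)).trans ?_
      simp only [Function.Involutive.coe_toPerm]
      rw [f2_lt _ _ _ _ ⟨(i:ℕ), by omega⟩ i rfl h]
    · apply Fin.ext
      refine (g2_ge _ _ _ _ i (by rw [hm']; exact h)).trans ?_
      rw [hm']
      exact (sS3' hinv hav i (by omega)).symm
  right_inv y := by
    obtain ⟨σ, hinv, hav⟩ := y
    apply Subtype.ext
    apply Equiv.ext
    intro i
    simp only [Function.Involutive.coe_toPerm]
    have hmlt : ((σ ⟨n-1, by omega⟩ : Fin n) : ℕ) < n := Fin.isLt _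
    have hm' : (g2 σ ((σ ⟨n-1, by omega⟩ : Fin n) : ℕ) hmlt (hb2' hn hinv hav)
        (Fin.last n) : ℕ) = ((σ ⟨n-1, by omega⟩ : Fin n) : ℕ) := by
      rw [g2_ge _ _ _ _ (Fin.last n) (by simp only [Fin.val_last]; omega)]
      simp only [Fin.val_last]
      omega
    by_cases h : (i : ℕ) < ((σ ⟨n-1, by omega⟩ : Fin n) : ℕ)
    · apply Fin.ext
      refine (f2_lt _ _ _ _ i ⟨(i:ℕ), by omega⟩ rfl (by rw [hm']; exact h)).trans ?_
      simp only [Function.Involutive.coe_toPerm]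
      rw [g2_lt _ _ _ _ ⟨(i:ℕ), by omega⟩ i rfl h]
    · apply Fin.ext
      refine (f2_ge _ _ _ _ i (by rw [hm']; exact h)).trans ?_
      rw [hm']
      exact (sS3'' hn hinv hav rfl i (by omega)).symm

end Equivs

end AvAux
namespace AvAux

lemma card_one : Nat.card {τ : Equiv.Perm (Fin 1) // τ * τ = 1 ∧ Av312 τ} = 1 := by
  rw [Nat.card_eq_one_iff_unique]
  constructor
  · constructor
    intro a b
    apply Subtype.ext
    exact Subsingleton.elim _ _
  · refine ⟨1, by simp, ?_⟩
    rintro ⟨i, j, k, hij, hjk, -, -⟩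
    have h1 : (i : ℕ) < (j : ℕ) := hij
    have h2 : (j : ℕ) < (k : ℕ) := hjk
    have := i.isLt
    have := j.isLt
    have := k.isLt
    omega

lemma card_step (n : ℕ) (hn : 0 < n) :
    Nat.card {τ : Equiv.Perm (Fin (n+1)) // τ * τ = 1 ∧ Av312 τ}
      = 2 * Nat.card {σ : Equiv.Perm (Fin n) // σ * σ = 1 ∧ Av312 σ} := by
  classical
  set p : Equiv.Perm (Fin (n+1)) → Prop := fun τ => τ * τ = 1 ∧ Av312 τ with hp
  set q : Equiv.Perm (Fin (n+1)) → Prop := fun τ => τ (Fin.last n) = Fin.last n with hq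
  have e0 : {τ : Equiv.Perm (Fin (n+1)) // p τ}
      ≃ {x : {τ : Equiv.Perm (Fin (n+1)) // p τ} // q x.1}
        ⊕ {x : {τ : Equiv.Perm (Fin (n+1)) // p τ} // ¬ q x.1} :=
    (Equiv.sumCompl _).symm
  have e1 : {x : {τ : Equiv.Perm (Fin (n+1)) // p τ} // q x.1}
      ≃ {τ : Equiv.Perm (Fin (n+1)) // p τ ∧ q τ} :=
    Equiv.subtypeSubtypeEquivSubtypeInter p q
  have e2 : {x : {τ : Equiv.Perm (Fin (n+1)) // p τ} // ¬ q x.1}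
      ≃ {τ : Equiv.Perm (Fin (n+1)) // p τ ∧ ¬ q τ} :=
    Equiv.subtypeSubtypeEquivSubtypeInter p (fun τ => ¬ q τ)
  calc Nat.card {τ : Equiv.Perm (Fin (n+1)) // p τ}
      = Nat.card ({x : {τ : Equiv.Perm (Fin (n+1)) // p τ} // q x.1}
        ⊕ {x : {τ : Equiv.Perm (Fin (n+1)) // p τ} // ¬ q x.1}) := Nat.card_congr e0
    _ = Nat.card {x : {τ : Equiv.Perm (Fin (n+1)) // p τ} // q x.1}
        + Nat.card {x : {τ : Equiv.Perm (Fin (n+1)) // p τ} // ¬ q x.1} := Nat.card_sum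
    _ = Nat.card {τ : Equiv.Perm (Fin (n+1)) // p τ ∧ q τ}
        + Nat.card {τ : Equiv.Perm (Fin (n+1)) // p τ ∧ ¬ q τ} := by
          rw [Nat.card_congr e1, Nat.card_congr e2]
    _ = Nat.card {σ : Equiv.Perm (Fin n) // σ * σ = 1 ∧ Av312 σ}
        + Nat.card {σ : Equiv.Perm (Fin n) // σ * σ = 1 ∧ Av312 σ} := by
          rw [Nat.card_congr (E1 (n := n)), Nat.card_congr (E2 (n := n) hn)]
    _ = 2 * Nat.card {σ : Equiv.Perm (Fin n) // σ * σ = 1 ∧ Av312 σ} := by ring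

lemma card_all (n : ℕ) (hn : 1 ≤ n) :
    Nat.card {τ : Equiv.Perm (Fin n) // τ * τ = 1 ∧ Av312 τ} = 2 ^ (n - 1) := by
  induction n with
  | zero => omega
  | succ n ih =>
    rcases Nat.eq_or_lt_of_le hn with h | h
    · have : n = 0 := by omega
      subst this
      simpa using card_one
    · have hn' : 1 ≤ n := by omega
      rw [card_step n (by omega), ih hn']
      have : n + 1 - 1 = (n - 1) + 1 := by omega
      rw [this, pow_succ]
      ring

end AvAux

theorem involutions_avoiding_312 (n : ℕ) :
    (∀ τ : Equiv.Perm (Fin n), τ * τ = 1 → Av312 τ → Av3412 τ ∧ Av231 τ) ∧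
    {τ : Equiv.Perm (Fin n) | τ * τ = 1 ∧ Av3412 τ ∧ Av312 τ} =
      {τ : Equiv.Perm (Fin n) | τ * τ = 1 ∧ Av3412 τ ∧ Av231 τ} ∧
    {τ : Equiv.Perm (Fin n) | τ * τ = 1 ∧ Av3412 τ ∧ Av312 τ} =
      {τ : Equiv.Perm (Fin n) | τ * τ = 1 ∧ Av312 τ} ∧
    (1 ≤ n →
      Nat.card {τ : Equiv.Perm (Fin n) // τ * τ = 1 ∧ Av312 τ} = 2 ^ (n - 1)) := by
  refine ⟨?_, ?_, ?_, ?_⟩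
  · intro τ h1 h2
    exact ⟨AvAux.av312_imp_av3412 h2, AvAux.inv_av312_imp_av231 h1 h2⟩
  · ext τ
    simp only [Set.mem_setOf_eq]
    constructor
    · rintro ⟨a, b, c⟩
      exact ⟨a, b, AvAux.inv_av312_imp_av231 a c⟩
    · rintro ⟨a, b, c⟩
      exact ⟨a, b, AvAux.inv_av231_imp_av312 a c⟩
  · ext τ
    simp only [Set.mem_setOf_eq]
    constructor
    · rintro ⟨a, b, c⟩
      exact ⟨a, c⟩
    · rintro ⟨a, c⟩
      exact ⟨a, AvAux.av312_imp_av3412 c, c⟩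
  · intro hn
    exact AvAux.card_all n hn
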